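/- Let X be a regular T1 space such that the co-diagonal Δ^c_X = (X × X) \ Δ_X is discretely Lindelöf. Then X has a small diagonal. -/

import Mathlib

open Set Topology Cardinal

universe u

/-- The co-diagonal of `X`: the complement of the diagonal in `X × X`. -/
def codiag (X : Type u) [TopologicalSpace X] : Set (X × X) := {p | p.1 ≠ p.2}

/-- A space is discretely Lindelöf if the closure of every discrete subset is
Lindelöf. -/
def DiscretelyLindelof (Z : Type u) [TopologicalSpace Z] : Prop :=
  ∀ D : Set Z, DiscreteTopology D → IsLindelof (closure D)

/-- `X` has a small diagonal if every uncountable subset of the co-diagonal has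
an uncountable subset whose closure misses the diagonal. -/
def HasSmallDiagonal (X : Type u) [TopologicalSpace X] : Prop :=
  ∀ A : Set (X × X), A ⊆ codiag X → ¬ A.Countable →
    ∃ B ⊆ A, ¬ B.Countable ∧ closure B ∩ {p : X × X | p.1 = p.2} = ∅

/-- Pigeonhole: an uncountable set covered by countably many sets meets one of
them in an uncountable set. -/
lemma uncountable_biUnion_aux {α : Type*} {ι : Type*} {r : Set ι} (hr : r.Countable)
    (U : ι → Set α) {s : Set α} (hs : ¬ s.Countable) (hsub : s ⊆ ⋃ i ∈ r, U i) :
    ∃ i ∈ r, ¬ (s ∩ U i).Countable := by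
  by_contra hcon
  push_neg at hcon
  apply hs
  have hsub' : s ⊆ ⋃ i ∈ r, (s ∩ U i) := by
    intro x hx
    obtain ⟨i, hi, hxi⟩ := mem_iUnion₂.mp (hsub hx)
    exact mem_iUnion₂.mpr ⟨i, hi, ⟨hx, hxi⟩⟩
  exact ((hr.biUnion fun i hi => hcon i hi).mono hsub')

/-- If `X` is regular T1 and its co-diagonal is discretely Lindelöf, then `X`
has a small diagonal. -/
theorem codiag_discretelyLindelof_smallDiagonal
    (X : Type u) [TopologicalSpace X] [T1Space X] [RegularSpace X]
    (h : DiscretelyLindelof ↥(codiag X)) :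
    HasSmallDiagonal X := by
  intro A hAc hAu
  -- the co-diagonal is open since `X` is Hausdorff (T1 + regular)
  have hopen : IsOpen (codiag X) := by
    have he : codiag X = (diagonal X)ᶜ := by
      ext p; simp [codiag, Set.diagonal]
    rw [he]
    exact isClosed_diagonal.isOpen_compl
  -- regularity of `X × X`: shrink neighbourhoods to closed ones inside open sets
  have reg : ∀ (S : Set (X × X)), IsOpen S → ∀ p ∈ S,
      ∃ V, IsOpen V ∧ p ∈ V ∧ closure V ⊆ S := by
    intro S hS p hp
    obtain ⟨t, ht, htc, hts⟩ := exists_mem_nhds_isClosed_subset (hS.mem_nhds hp)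
    exact ⟨interior t, isOpen_interior, mem_interior_iff_mem_nhds.mpr ht,
      (closure_minimal interior_subset htc).trans hts⟩
  -- the family for Zorn's lemma: sets of pairs (point of A, open nbhd with
  -- closure in the co-diagonal) forming a "separated" configuration
  set S : Set (Set ((X × X) × Set (X × X))) :=
    {F | ∀ q ∈ F, q.1 ∈ A ∧ IsOpen q.2 ∧ q.1 ∈ q.2 ∧ closure q.2 ⊆ codiag X ∧
      (∀ q' ∈ F, q' ≠ q → q'.1 ∉ q.2)} with hSdef
  obtain ⟨F, hF⟩ : ∃ F, Maximal (· ∈ S) F := by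
    apply zorn_subset
    intro c hcS hchain
    refine ⟨⋃₀ c, ?_, fun s hs => subset_sUnion_of_mem hs⟩
    intro q hq
    obtain ⟨F₁, hF₁c, hqF₁⟩ := hq
    have h₁ := hcS hF₁c q hqF₁
    refine ⟨h₁.1, h₁.2.1, h₁.2.2.1, h₁.2.2.2.1, ?_⟩
    intro q' hq' hne
    obtain ⟨F₂, hF₂c, hq'F₂⟩ := hq'
    rcases hchain.total hF₁c hF₂c with hle | hle
    · exact (hcS hF₂c q (hle hqF₁)).2.2.2.2 q' hq'F₂ hne
    · exact h₁.2.2.2.2 q' (hle hq'F₂) hne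
  have hFS : F ∈ S := hF.1
  set D : Set (X × X) := Prod.fst '' F with hDdef
  have hDA : D ⊆ A := by
    rintro x ⟨q, hqF, rfl⟩
    exact (hFS q hqF).1
  -- maximality: every point of A is in the closure of D or in one of the V's
  have hcover : ∀ a ∈ A, a ∈ closure D ∨ ∃ q ∈ F, a ∈ q.2 := by
    intro a ha
    by_contra hcon
    push_neg at hcon
    obtain ⟨hacl, hanot⟩ := hcon
    obtain ⟨V, hVo, haV, hVc⟩ :=
      reg ((codiag X) \ closure D) (hopen.sdiff isClosed_closure) a ⟨hAc ha, hacl⟩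
    have hnew : insert (a, V) F ∈ S := by
      intro q hq
      rcases hq with rfl | hqF
      · refine ⟨ha, hVo, haV, fun y hy => (hVc hy).1, ?_⟩
        intro q' hq' hne
        rcases hq' with rfl | hq'F
        · exact absurd rfl hne
        · intro hmem
          exact (hVc (subset_closure hmem)).2
            (subset_closure (mem_image_of_mem Prod.fst hq'F))
      · obtain ⟨h1, h2, h3, h4, h5⟩ := hFS q hqF
        refine ⟨h1, h2, h3, h4, ?_⟩
        intro q' hq' hne
        rcases hq' with rfl | hq'F
        · exact hanot q hqF
        · exact h5 q' hq'F hne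
    have hsub := hF.2 hnew (subset_insert _ _)
    exact hanot (a, V) (hsub (mem_insert _ _)) haV
  -- first coordinates are distinct across distinct pairs of F
  -- (automatic: if q' ≠ q but q'.1 = q.1, then q'.1 = q.1 ∈ q.2, contradiction)
  have hinj : InjOn Prod.fst F := by
    intro q hq q' hq' he
    by_contra hne
    apply (hFS q' hq').2.2.2.2 q hq hne
    rw [he]
    exact (hFS q' hq').2.2.1
  -- a choice of regular neighbourhoods for all points of the co-diagonal
  have hU : ∀ p : ↥(codiag X), ∃ V, IsOpen V ∧ (p : X × X) ∈ V ∧ closure V ⊆ codiag X :=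
    fun p => reg (codiag X) hopen p p.2
  choose U hUo hUm hUc using hU
  by_cases hcase : (A ∩ closure D).Countable
  · -- D is countable, hence so is F; use the second half of the cover
    have hDc : D.Countable := by
      apply Set.Countable.mono _ hcase
      intro x hx
      exact ⟨hDA hx, subset_closure hx⟩
    have hFc : F.Countable :=
      (MapsTo.countable_of_injOn (mapsTo_image Prod.fst F) hinj hDc)
    have hA'u : ¬ (A \ closure D).Countable := by
      intro hc
      apply hAu
      have : A ⊆ (A ∩ closure D) ∪ (A \ closure D) := by
        intro x hx
        by_cases hxc : x ∈ closure D
        · exact Or.inl ⟨hx, hxc⟩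
        · exact Or.inr ⟨hx, hxc⟩
      exact (hcase.union hc).mono this
    have hsub : (A \ closure D) ⊆ ⋃ q ∈ F, q.2 := by
      intro x hx
      rcases hcover x hx.1 with hc | ⟨q, hqF, hxq⟩
      · exact absurd hc hx.2
      · exact mem_iUnion₂.mpr ⟨q, hqF, hxq⟩
    obtain ⟨q, hqF, hquc⟩ := uncountable_biUnion_aux hFc (fun q => q.2) hA'u hsub
    refine ⟨A ∩ q.2, inter_subset_left, ?_, ?_⟩
    · intro hc
      apply hquc
      apply Set.Countable.mono _ hc
      intro x hx
      exact ⟨hx.1.1, hx.2⟩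
    · rw [eq_empty_iff_forall_notMem]
      rintro y ⟨hy1, hy2⟩
      exact (hFS q hqF).2.2.2.1 (closure_mono inter_subset_right hy1) hy2
  · -- D, as a subset of the co-diagonal, is discrete; use Lindelöfness of its closure
    set D' : Set ↥(codiag X) := Subtype.val ⁻¹' D with hD'def
    have hdisc : DiscreteTopology ↥D' := by
      rw [discreteTopology_iff_isOpen_singleton]
      rintro ⟨x, hxD'⟩
      obtain ⟨q, hqF, hq1⟩ := hxD'
      have hopen' : IsOpen ((fun w : ↥D' => ((w : ↥(codiag X)) : X × X)) ⁻¹' q.2) :=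
        ((hFS q hqF).2.1).preimage (continuous_subtype_val.comp continuous_subtype_val)
      have : {(⟨x, ⟨q, hqF, hq1⟩⟩ : ↥D')} =
          (fun w : ↥D' => ((w : ↥(codiag X)) : X × X)) ⁻¹' q.2 := by
        ext w
        simp only [mem_singleton_iff, mem_preimage]
        constructor
        · rintro rfl
          simpa [hq1] using (hFS q hqF).2.2.1
        · intro hw
          obtain ⟨q', hq'F, hq'1⟩ := w.2
          have hqq : q' = q := by
            by_contra hne
            exact (hFS q hqF).2.2.2.2 q' hq'F hne (hq'1 ▸ hw)
          apply Subtype.ext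
          apply Subtype.ext
          show ((w : ↥(codiag X)) : X × X) = x
          rw [← hq'1, hqq, hq1]
      rw [this]
      exact hopen'
    have hLin : IsLindelof (closure D') := h D' hdisc
    have hcov : closure D' ⊆ ⋃ p : ↥(codiag X), Subtype.val ⁻¹' (U p) := by
      intro y _
      exact mem_iUnion.mpr ⟨y, hUm y⟩
    obtain ⟨r, hr, hrc⟩ := hLin.elim_countable_subcover
      (fun p => Subtype.val ⁻¹' (U p))
      (fun p => (hUo p).preimage continuous_subtype_val) hcov
    have hsub : (A ∩ closure D) ⊆ ⋃ p ∈ r, U p := by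
      rintro x ⟨hxA, hxcl⟩
      have hxc : x ∈ codiag X := hAc hxA
      have hmem : (⟨x, hxc⟩ : ↥(codiag X)) ∈ closure D' := by
        rw [closure_subtype]
        have himg : (Subtype.val : ↥(codiag X) → X × X) '' D' = D := by
          rw [hD'def, Subtype.image_preimage_coe]
          exact inter_eq_self_of_subset_right (hDA.trans hAc)
        rw [himg]
        exact hxcl
      obtain ⟨p, hp, hxp⟩ := mem_iUnion₂.mp (hrc hmem)
      exact mem_iUnion₂.mpr ⟨p, hp, hxp⟩
    obtain ⟨p, hpr, hpuc⟩ := uncountable_biUnion_aux hr U hcase hsub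
    refine ⟨A ∩ U p, inter_subset_left, ?_, ?_⟩
    · intro hc
      apply hpuc
      apply Set.Countable.mono _ hc
      intro x hx
      exact ⟨hx.1.1, hx.2⟩
    · rw [eq_empty_iff_forall_notMem]
      rintro y ⟨hy1, hy2⟩
      exact hUc p (closure_mono inter_subset_right hy1) hy2
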